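/- arXiv:2509.24265 — 2 statements merged into one kernel-verified Lean document; each statement's English description precedes it below -/
import Mathlib

section
/- Let c ≥ 0 and r ≥ 0 be integers. In the field ℚ(v, K), one has [K;c,r]_v = ∑_{s=0}^{r} v^{c(r−s)} [c choose s]_v K^{−s} [K;0,r−s]_v. -/
/-- The field `ℚ(v, K)` of rational functions in two variables, realized as `ℚ(v)(K)`. -/
noncomputable abbrev F2 : Type := RatFunc (RatFunc ℚ)

/-- The variable `v` of `ℚ(v, K)`. -/
noncomputable def vv : F2 := RatFunc.C RatFunc.X

/-- The variable `K` of `ℚ(v, K)`. -/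
noncomputable def KK : F2 := RatFunc.X

/-- `[K;c,t]_v = ∏_{s=1}^{t} (K v^{c−s+1} − K^{−1} v^{−c+s−1})/(v^s − v^{−s})`. -/
noncomputable def Kbr (c : ℤ) (t : ℕ) : F2 :=
  ∏ s ∈ Finset.range t,
    (KK * vv ^ (c - (s : ℤ)) - KK⁻¹ * vv ^ (-c + (s : ℤ))) /
      (vv ^ ((s : ℤ) + 1) - vv ^ (-(s : ℤ) - 1))

/-- The balanced quantum number `[c]_v = (v^c − v^{−c})/(v − v^{−1})` for `c ∈ ℤ`. -/
noncomputable def qintF (c : ℤ) : F2 := (vv ^ c - vv ^ (-c)) / (vv - vv⁻¹)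

/-- The balanced quantum factorial `[m]!_v`. -/
noncomputable def qfactF (m : ℕ) : F2 := ∏ k ∈ Finset.range m, qintF ((k : ℤ) + 1)

/-- `[c choose m]_v = [c]_v[c−1]_v⋯[c−m+1]_v/[m]!_v` for `c ∈ ℤ`, `m ∈ ℕ`. -/
noncomputable def qbinomF (c : ℤ) (m : ℕ) : F2 :=
  (∏ k ∈ Finset.range m, qintF (c - (k : ℤ))) / qfactF m

lemma hK : KK ≠ 0 := RatFunc.X_ne_zero
lemma hv : vv ≠ 0 := by simp [vv, RatFunc.X_ne_zero]

lemma vpow_ne_one (n : ℕ) (hn : n ≠ 0) : vv ^ n ≠ 1 := by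
  intro h
  have h1 : (RatFunc.C ((RatFunc.X : RatFunc ℚ) ^ n) : F2) = RatFunc.C 1 := by
    simpa [vv, map_pow] using h
  have h2 : (RatFunc.X : RatFunc ℚ) ^ n = 1 := RatFunc.C.injective h1
  have h3 : algebraMap (Polynomial ℚ) (RatFunc ℚ) (Polynomial.X ^ n) =
      algebraMap (Polynomial ℚ) (RatFunc ℚ) 1 := by
    simpa [map_pow, RatFunc.algebraMap_X] using h2
  have h4 := RatFunc.algebraMap_injective ℚ h3
  have h5 := congrArg Polynomial.natDegree h4
  simp [Polynomial.natDegree_X_pow] at h5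
  exact hn h5

lemma vzpow_ne_one (n : ℤ) (hn : n ≠ 0) : vv ^ n ≠ 1 := by
  intro h
  rcases lt_or_gt_of_ne hn with h' | h'
  · have : vv ^ (-n).toNat ≠ 1 := vpow_ne_one _ (by omega)
    apply this
    rw [← zpow_natCast, Int.toNat_of_nonneg (by omega), zpow_neg, h, inv_one]
  · have : vv ^ n.toNat ≠ 1 := vpow_ne_one _ (by omega)
    apply this
    rw [← zpow_natCast, Int.toNat_of_nonneg (by omega), h]

lemma vsub_ne (a b : ℤ) (h : a ≠ b) : vv ^ a - vv ^ b ≠ 0 := by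
  intro hc
  have hb : vv ^ b ≠ 0 := zpow_ne_zero _ hv
  have : vv ^ (a - b) = 1 := by
    rw [zpow_sub₀ hv, div_eq_one_iff_eq hb]
    exact sub_eq_zero.mp hc
  exact vzpow_ne_one _ (by omega) this

lemma vden_ne (s : ℕ) : vv ^ ((s:ℤ) + 1) - vv ^ (-(s:ℤ) - 1) ≠ 0 := vsub_ne _ _ (by omega)

lemma vv_sub_inv_ne : vv - vv⁻¹ ≠ 0 := by
  have := vsub_ne 1 (-1) (by omega)
  simpa [zpow_one, zpow_neg] using this

lemma qint_ne (m : ℕ) : qintF ((m:ℤ)+1) ≠ 0 :=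
  div_ne_zero (vsub_ne _ _ (by omega)) vv_sub_inv_ne

lemma qfact_ne (m : ℕ) : qfactF m ≠ 0 :=
  Finset.prod_ne_zero_iff.mpr fun k _ => qint_ne k

lemma qint_add (a b : ℤ) : qintF (a+b) = vv^b * qintF a + vv^(-a) * qintF b := by
  unfold qintF
  rw [← mul_div_assoc, ← mul_div_assoc, ← add_div]
  congr 1
  simp only [neg_add, zpow_add₀ hv, zpow_neg]
  field_simp
  ring

lemma qbinom_zero (c : ℤ) : qbinomF c 0 = 1 := by
  simp [qbinomF, qfactF]

lemma qfact_succ (m : ℕ) : qfactF (m+1) = qfactF m * qintF ((m:ℤ)+1) := by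
  rw [qfactF, Finset.prod_range_succ]; rfl

lemma qbinom_succ (c : ℤ) (m : ℕ) :
    qbinomF c (m+1) = qbinomF c m * qintF (c - (m:ℤ)) / qintF ((m:ℤ)+1) := by
  rw [qbinomF, Finset.prod_range_succ, qfact_succ, qbinomF]
  field_simp

lemma qbinom_succ_left (c : ℤ) (m : ℕ) :
    qbinomF (c+1) (m+1) = qbinomF c m * qintF (c+1) / qintF ((m:ℤ)+1) := by
  rw [qbinomF, Finset.prod_range_succ', qfact_succ, qbinomF]
  have : ∀ k : ℕ, qintF (c + 1 - ((k:ℤ) + 1)) = qintF (c - (k:ℤ)) := by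
    intro k; congr 1; ring
  simp only [Nat.cast_add, Nat.cast_one, this, Nat.cast_zero, sub_zero]
  field_simp

lemma qbinom_pascal (c : ℤ) (m : ℕ) :
    qbinomF (c+1) (m+1) =
      vv^((m:ℤ)+1) * qbinomF c (m+1) + vv^((m:ℤ)-(c:ℤ)) * qbinomF c m := by
  rw [qbinom_succ_left, qbinom_succ]
  have h := qint_add (c - (m:ℤ)) ((m:ℤ)+1)
  rw [show c - (m:ℤ) + ((m:ℤ)+1) = c + 1 by ring,
      show (-(c - (m:ℤ))) = (m:ℤ) - c by ring] at h
  rw [h]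
  have hne : qintF ((m:ℤ)+1) ≠ 0 := qint_ne m
  set Q := qintF ((m:ℤ)+1) with hQ
  field_simp

lemma Kbr_succ (c : ℤ) (t : ℕ) :
    Kbr c (t+1) = Kbr c t *
      (KK * vv ^ (c - (t : ℤ)) - KK⁻¹ * vv ^ (-c + (t : ℤ))) /
        (vv ^ ((t : ℤ) + 1) - vv ^ (-(t : ℤ) - 1)) := by
  rw [Kbr, Finset.prod_range_succ, ← Kbr, mul_div_assoc]

lemma Kbr_shift (c : ℤ) (t : ℕ) :
    Kbr (c+1) (t+1) = Kbr c t *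
      (KK * vv ^ (c + 1) - KK⁻¹ * vv ^ (-(c + 1))) /
        (vv ^ ((t : ℤ) + 1) - vv ^ (-(t : ℤ) - 1)) := by
  have hnum : (∏ s ∈ Finset.range (t+1),
      (KK * vv ^ ((c+1) - (s : ℤ)) - KK⁻¹ * vv ^ (-(c+1) + (s : ℤ)))) =
      (∏ s ∈ Finset.range t, (KK * vv ^ (c - (s : ℤ)) - KK⁻¹ * vv ^ (-c + (s : ℤ)))) *
        (KK * vv ^ (c + 1) - KK⁻¹ * vv ^ (-(c + 1))) := by
    rw [Finset.prod_range_succ']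
    congr 1
    · apply Finset.prod_congr rfl
      intro s _
      congr 2
      · push_cast; ring
      · push_cast; ring
    · congr 2
      · push_cast; ring
      · push_cast; ring
  have hden : (∏ s ∈ Finset.range (t+1), (vv ^ ((s:ℤ) + 1) - vv ^ (-(s:ℤ) - 1))) =
      (∏ s ∈ Finset.range t, (vv ^ ((s:ℤ) + 1) - vv ^ (-(s:ℤ) - 1))) *
        (vv ^ ((t:ℤ) + 1) - vv ^ (-(t:ℤ) - 1)) := Finset.prod_range_succ _ _
  rw [Kbr, Kbr, Finset.prod_div_distrib, Finset.prod_div_distrib, hnum, hden,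
      mul_div_assoc]
  have hB : (∏ s ∈ Finset.range t, (vv ^ ((s:ℤ) + 1) - vv ^ (-(s:ℤ) - 1))) ≠ 0 :=
    Finset.prod_ne_zero_iff.mpr fun s _ => vden_ne s
  field_simp

lemma zpow_merge (a b d : ℤ) (h : a + b = d) : vv ^ a * vv ^ b = vv ^ d := by
  rw [← zpow_add₀ hv, h]

lemma Kbr_scalar (c : ℤ) (t : ℕ) :
    KK * vv ^ (c + 1) - KK⁻¹ * vv ^ (-(c + 1)) =
      vv ^ ((t:ℤ)+1) * (KK * vv ^ (c - (t:ℤ)) - KK⁻¹ * vv ^ (-c + (t:ℤ))) +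
        vv ^ ((t:ℤ)-c) * KK⁻¹ * (vv ^ ((t:ℤ) + 1) - vv ^ (-(t:ℤ) - 1)) := by
  have h1 := zpow_merge ((t:ℤ)+1) (c-(t:ℤ)) (c+1) (by ring)
  have h2 := zpow_merge ((t:ℤ)+1) (-c+(t:ℤ)) (2*(t:ℤ)-c+1) (by ring)
  have h3 := zpow_merge ((t:ℤ)-c) ((t:ℤ)+1) (2*(t:ℤ)-c+1) (by ring)
  have h4 := zpow_merge ((t:ℤ)-c) (-(t:ℤ)-1) (-(c+1)) (by ring)
  linear_combination -KK * h1 + KK⁻¹ * h2 - KK⁻¹ * h3 + KK⁻¹ * h4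

lemma Kbr_pascal (c : ℤ) (t : ℕ) :
    Kbr (c+1) (t+1) =
      vv ^ ((t:ℤ)+1) * Kbr c (t+1) + vv ^ ((t:ℤ)-c) * KK⁻¹ * Kbr c t := by
  rw [Kbr_shift, Kbr_succ, Kbr_scalar c t]
  have hD := vden_ne t
  set D := vv ^ ((t:ℤ) + 1) - vv ^ (-(t:ℤ) - 1) with hDdef
  set Nc := KK * vv ^ (c - (t:ℤ)) - KK⁻¹ * vv ^ (-c + (t:ℤ)) with hNc
  field_simp

lemma Kzpow_merge (a b d : ℤ) (h : a + b = d) : KK ^ a * KK ^ b = KK ^ d := by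
  rw [← zpow_add₀ hK, h]

lemma qintF_zero : qintF 0 = 0 := by simp [qintF]

lemma qbinomF_zero_pos (m : ℕ) : qbinomF 0 (m+1) = 0 := by
  rw [qbinomF]
  rw [Finset.prod_eq_zero (Finset.mem_range.mpr (Nat.succ_pos m))]
  · exact zero_div _
  · simpa using qintF_zero

lemma term_step (c s r : ℕ) :
    vv ^ ((r:ℤ)+1) * (vv ^ ((c:ℤ)*(((r:ℤ)+1)-((s:ℤ)+1))) * qbinomF (c:ℤ) (s+1) *
        KK ^ (-((s:ℤ)+1)) * Kbr 0 (r-s)) +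
      vv ^ ((r:ℤ)-(c:ℤ)) * KK⁻¹ * (vv ^ ((c:ℤ)*((r:ℤ)-(s:ℤ))) * qbinomF (c:ℤ) s *
        KK ^ (-(s:ℤ)) * Kbr 0 (r-s)) =
    vv ^ (((c:ℤ)+1)*(((r:ℤ)+1)-((s:ℤ)+1))) * qbinomF ((c:ℤ)+1) (s+1) *
        KK ^ (-((s:ℤ)+1)) * Kbr 0 (r-s) := by
  rw [qbinom_pascal]
  have m1 := zpow_merge ((r:ℤ)+1) ((c:ℤ)*(((r:ℤ)+1)-((s:ℤ)+1)))
    (((c:ℤ)+1)*((r:ℤ)-(s:ℤ)) + ((s:ℤ)+1)) (by ring)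
  have m1' := zpow_merge (((c:ℤ)+1)*(((r:ℤ)+1)-((s:ℤ)+1))) ((s:ℤ)+1)
    (((c:ℤ)+1)*((r:ℤ)-(s:ℤ)) + ((s:ℤ)+1)) (by ring)
  have m2 := zpow_merge ((r:ℤ)-(c:ℤ)) ((c:ℤ)*((r:ℤ)-(s:ℤ)))
    (((c:ℤ)+1)*((r:ℤ)-(s:ℤ)) + ((s:ℤ)-(c:ℤ))) (by ring)
  have m2' := zpow_merge (((c:ℤ)+1)*(((r:ℤ)+1)-((s:ℤ)+1))) ((s:ℤ)-(c:ℤ))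
    (((c:ℤ)+1)*((r:ℤ)-(s:ℤ)) + ((s:ℤ)-(c:ℤ))) (by ring)
  have hK1 : KK⁻¹ * KK ^ (-(s:ℤ)) = KK ^ (-((s:ℤ)+1)) := by
    rw [← zpow_neg_one]
    exact Kzpow_merge _ _ _ (by ring)
  set X := qbinomF (c:ℤ) (s+1)
  set Y := qbinomF (c:ℤ) s
  set B := Kbr 0 (r-s)
  set Ks := KK ^ (-((s:ℤ)+1))
  linear_combination X*Ks*B*(m1 - m1') + Y*B*vv^((c:ℤ)*((r:ℤ)-(s:ℤ)))*vv^((r:ℤ)-(c:ℤ))*hK1 +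
    Y*Ks*B*(m2 - m2')

/-- For integers `c ≥ 0`, `r ≥ 0`, in `ℚ(v,K)`:
`[K;c,r]_v = ∑_{s=0}^{r} v^{c(r−s)} [c choose s]_v K^{−s} [K;0,r−s]_v`. -/
theorem stmt5 (c r : ℕ) :
    Kbr (c : ℤ) r =
      ∑ s ∈ Finset.range (r + 1),
        vv ^ ((c : ℤ) * ((r : ℤ) - (s : ℤ))) * qbinomF (c : ℤ) s *
          KK ^ (-(s : ℤ)) * Kbr 0 (r - s) := by
  induction c generalizing r with
  | zero =>
    rw [Finset.sum_eq_single 0]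
    · simp [qbinom_zero]
    · intro b _ hb
      obtain ⟨m, rfl⟩ := Nat.exists_eq_succ_of_ne_zero hb
      simp [qbinomF_zero_pos]
    · intro h
      exact absurd (Finset.mem_range.mpr (Nat.succ_pos r)) h
  | succ c ih =>
    have hc : ((c+1:ℕ):ℤ) = (c:ℤ)+1 := by push_cast; ring
    rw [hc]
    cases r with
    | zero => simp [Kbr, qbinom_zero]
    | succ r =>
      rw [Kbr_pascal, ih, ih, Finset.mul_sum, Finset.mul_sum,
        Finset.sum_range_succ' (fun s => vv ^ ((r:ℤ)+1) *
          (vv ^ ((c:ℤ)*((↑(r+1):ℤ)-(s:ℤ))) * qbinomF (c:ℤ) s *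
            KK ^ (-(s:ℤ)) * Kbr 0 (r+1-s))) (r+1),
        Finset.sum_range_succ' (fun s =>
          vv ^ (((c:ℤ)+1) * ((↑(r+1):ℤ) - (s:ℤ))) * qbinomF ((c:ℤ)+1) s *
            KK ^ (-(s:ℤ)) * Kbr 0 (r+1-s)) (r+1)]
      rw [add_right_comm, ← Finset.sum_add_distrib]
      congr 1
      · apply Finset.sum_congr rfl
        intro s _
        have := term_step c s r
        push_cast
        push_cast at this
        convert this using 3
      · -- s = 0 terms
        simp only [Nat.cast_zero, neg_zero, zpow_zero, mul_one, Nat.sub_zero, sub_zero,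
          qbinom_zero, mul_one]
        rw [← zpow_merge ((r:ℤ)+1) ((c:ℤ)*(↑(r+1):ℤ)) (((c:ℤ)+1)*(↑(r+1):ℤ)) (by push_cast; ring)]
        ring
end

section
/- Let A be an associative ℚ(v)-algebra containing elements x, e, z satisfying x e = v e x + v z and e z = v z e. Then for all m ≥ 1, x e^{(m)} = v^m e^{(m)} x + v^m z e^{(m−1)}. -/
/-- `v^n` in `ℚ(v)` for `n : ℤ`. -/
noncomputable def qv (n : ℤ) : RatFunc ℚ := (RatFunc.X : RatFunc ℚ) ^ n

/-- The balanced quantum integer `[m]_v = (v^m − v^{−m})/(v − v^{−1})` in `ℚ(v)`. -/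
noncomputable def qint (m : ℕ) : RatFunc ℚ := (qv m - qv (-(m : ℤ))) / (qv 1 - qv (-1))

/-- The balanced quantum factorial `[m]!_v` in `ℚ(v)`. -/
noncomputable def qfact (m : ℕ) : RatFunc ℚ := ∏ k ∈ Finset.range m, qint (k + 1)

/-- The divided power `x^{(m)} = x^m/[m]!_v` in a `ℚ(v)`-algebra. -/
noncomputable def dp {A : Type*} [Ring A] [Algebra (RatFunc ℚ) A] (x : A) (m : ℕ) : A :=
  (qfact m)⁻¹ • x ^ m

lemma qv_mul (a b : ℤ) : qv a * qv b = qv (a+b) := (zpow_add₀ RatFunc.X_ne_zero a b).symm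

lemma qv_zero : qv 0 = 1 := by simp [qv]

lemma qv_sub_ne (m : ℕ) (hm : 1 ≤ m) : qv m - qv (-(m:ℤ)) ≠ 0 := by
  intro h
  have h1 : qv (m:ℤ) = qv (-(m:ℤ)) := sub_eq_zero.mp h
  have h2 : (RatFunc.X : RatFunc ℚ) ^ (2*m) = 1 := by
    have h2' := congrArg (· * qv (m:ℤ)) h1
    simp only [qv_mul, neg_add_cancel] at h2'
    have h2'' : qv ((m:ℤ) + m) = 1 := by rw [h2', qv_zero]
    have h3 : ((2*m : ℕ) : ℤ) = (m:ℤ) + m := by push_cast; ring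
    rw [← h3] at h2''
    rw [qv, zpow_natCast] at h2''
    exact h2''
  have h4 : (Polynomial.X : Polynomial ℚ) ^ (2*m) = 1 := by
    apply RatFunc.algebraMap_injective ℚ
    simpa [map_pow, RatFunc.algebraMap_X] using h2
  have := congrArg Polynomial.natDegree h4
  simp [Polynomial.natDegree_X_pow] at this
  omega

lemma qd_ne : qv 1 - qv (-1) ≠ 0 := by simpa using qv_sub_ne 1 le_rfl

lemma qint_ne_zero (m : ℕ) (hm : 1 ≤ m) : qint m ≠ 0 :=
  div_ne_zero (qv_sub_ne m hm) qd_ne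

lemma qfact_ne_zero (m : ℕ) : qfact m ≠ 0 := by
  unfold qfact
  rw [Finset.prod_ne_zero_iff]
  exact fun k _ => qint_ne_zero (k+1) (Nat.le_add_left 1 k)

lemma qfact_succ_s9 (n : ℕ) : qfact (n+1) = qfact n * qint (n+1) := Finset.prod_range_succ _ n

lemma qint_one : qint 1 = 1 := by
  unfold qint
  exact div_self (by simpa using qd_ne)

lemma coeff_rec (m : ℕ) :
    qv (m+2) * qint (m+2) = qv (2*m+3) + qv (m+1) * qint (m+1) := by
  have hd := qd_ne
  unfold qint
  field_simp
  simp only [mul_sub, sub_mul, qv_mul]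
  ring_nf
  push_cast
  ring_nf

/-- Let `x, e, z` be elements of a `ℚ(v)`-algebra satisfying `x e = v e x + v z` and
`e z = v z e`.  Then for all `m ≥ 1`, `x e^{(m)} = v^m e^{(m)} x + v^m z e^{(m−1)}`. -/
theorem stmt9 {A : Type*} [Ring A] [Algebra (RatFunc ℚ) A] (x e z : A)
    (hxe : x * e = qv 1 • (e * x) + qv 1 • z)
    (hez : e * z = qv 1 • (z * e)) :
    ∀ m : ℕ, 1 ≤ m →
      x * dp e m = qv m • (dp e m * x) + qv m • (z * dp e (m - 1)) := by
  -- powers of e move past z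
  have hez_pow : ∀ m : ℕ, e ^ m * z = qv m • (z * e ^ m) := by
    intro m
    induction m with
    | zero => simp [qv_zero]
    | succ n ih =>
      rw [pow_succ, mul_assoc, hez, mul_smul_comm, ← mul_assoc, ih,
        smul_mul_assoc, smul_smul, qv_mul, mul_assoc, ← pow_succ]
      norm_num
      rw [add_comm]
  -- main commutation for plain powers
  have key : ∀ n : ℕ, x * e ^ (n+1) =
      qv (n+1) • (e ^ (n+1) * x) + (qv (n+1) * qint (n+1)) • (z * e ^ n) := by
    intro n
    induction n with
    | zero => simpa [qint_one] using hxe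
    | succ n ih =>
      calc x * e ^ (n+2) = (x * e ^ (n+1)) * e := by rw [pow_succ, mul_assoc]
        _ = qv (n+1) • (e ^ (n+1) * (x * e)) + (qv (n+1) * qint (n+1)) • (z * e ^ (n+1)) := by
            rw [ih, add_mul, smul_mul_assoc, smul_mul_assoc, mul_assoc, mul_assoc, ← pow_succ]
        _ = qv (n+1) • (e ^ (n+1) * (qv 1 • (e * x) + qv 1 • z))
              + (qv (n+1) * qint (n+1)) • (z * e ^ (n+1)) := by rw [hxe]
        _ = (qv (n+1) * qv 1) • (e ^ (n+2) * x) + (qv (n+1) * qv 1) • (e ^ (n+1) * z)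
              + (qv (n+1) * qint (n+1)) • (z * e ^ (n+1)) := by
            rw [mul_add, mul_smul_comm, mul_smul_comm, smul_add, smul_smul, smul_smul,
              ← mul_assoc, ← pow_succ]
        _ = (qv (n+2)) • (e ^ (n+2) * x)
              + ((qv (2*n+3)) + qv (n+1) * qint (n+1)) • (z * e ^ (n+1)) := by
            rw [hez_pow (n+1), smul_smul, qv_mul, qv_mul, add_smul]
            push_cast
            ring_nf
            rw [add_assoc]
        _ = qv (n+2) • (e ^ (n+2) * x) + (qv (n+2) * qint (n+2)) • (z * e ^ (n+1)) := by
            rw [← coeff_rec n]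
  intro m hm
  obtain ⟨n, rfl⟩ := Nat.exists_eq_add_of_le' hm
  simp only [Nat.add_sub_cancel, dp]
  push_cast
  rw [mul_smul_comm, key n, smul_add, smul_smul, smul_smul,
    smul_mul_assoc, smul_smul, mul_smul_comm, smul_smul]
  congr 1
  · rw [mul_comm]
  · congr 1
    rw [qfact_succ_s9, mul_inv]
    have h := qint_ne_zero (n+1) (Nat.le_add_left 1 n)
    field_simp
end
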